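/- Let G be a countable group with a temperate gauge (G_k) (each G_k finite and sup_k (1/k) log|G_k| < ∞). If a probability measure μ on G has finite first moment Σ_g |g| μ(g) < ∞ with respect to the gauge function |·|, then μ has finite Shannon entropy H(μ) = −Σ_g μ(g) log μ(g) < ∞. -/
import Mathlib

/-- Basic entropy inequality: `-p log p ≤ p t + exp (-t)` for `p ≥ 0`. -/
lemma aux_neg_mul_log_le (p t : ℝ) (hp : 0 ≤ p) :
    -(p * Real.log p) ≤ p * t + Real.exp (-t) := by
  rcases eq_or_lt_of_le hp with h | h
  · rw [← h]
    simpa using (Real.exp_pos (-t)).le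
  · have h1 : Real.log (Real.exp (-t) / p) ≤ Real.exp (-t) / p - 1 :=
      Real.log_le_sub_one_of_pos (by positivity)
    have h2 : Real.log (Real.exp (-t) / p) = -t - Real.log p := by
      rw [Real.log_div (Real.exp_ne_zero _) (ne_of_gt h), Real.log_exp]
    rw [h2] at h1
    have h3 := mul_le_mul_of_nonneg_left h1 hp
    have h4 : p * (Real.exp (-t) / p - 1) = Real.exp (-t) - p := by
      field_simp
    rw [h4] at h3
    nlinarith

/-- On a group with a temperate gauge, a probability measure with finite first moment
has finite Shannon entropy. -/
theorem finite_first_moment_finite_entropy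
    {G : Type*} [Group G] [Countable G]
    (Gk : ℕ → Set G) (hmono : Monotone Gk) (hexh : ∀ g : G, ∃ k, g ∈ Gk k)
    (hfin : ∀ k, (Gk k).Finite)
    (C : ℝ) (hC : ∀ k, ((hfin k).toFinset.card : ℝ) ≤ Real.exp (C * k))
    (μ : G → ℝ) (hpos : ∀ g, 0 ≤ μ g) (hsum : ∑' g, μ g = 1)
    (hmom : Summable (fun g : G => ((sInf {k : ℕ | g ∈ Gk k} : ℕ) : ℝ) * μ g)) :
    Summable (fun g : G => -(μ g * Real.log (μ g))) := by
  classical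
  set ν : G → ℕ := fun g => sInf {k : ℕ | g ∈ Gk k} with hνdef
  have hmemν : ∀ g, g ∈ Gk (ν g) := fun g => Nat.sInf_mem (hexh g)
  -- μ is summable and bounded by 1
  have hμ : Summable μ := by
    by_contra h
    rw [tsum_eq_zero_of_not_summable h] at hsum
    norm_num at hsum
  have hμ1 : ∀ g, μ g ≤ 1 := by
    intro g
    rw [← hsum]
    exact Summable.le_tsum hμ g fun g' _ => hpos g'
  set α : ℝ := max C 0 + 1 with hαdef
  have hα0 : 0 < α := lt_of_lt_of_le one_pos (by simp [hαdef, le_max_right])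
  have hCα : C - α ≤ -1 := by
    have : C ≤ max C 0 := le_max_left _ _
    simp only [hαdef]; linarith
  -- summability of the exponential tail
  have hexp : Summable (fun g : G => Real.exp (-(α * ν g))) := by
    refine summable_of_sum_le (fun g => (Real.exp_pos _).le)
      (c := ∑' k : ℕ, Real.exp (-1) ^ k) ?_
    intro u
    have hmaps : ∀ g ∈ u, ν g ∈ u.image ν := fun g hg => Finset.mem_image_of_mem ν hg
    rw [← Finset.sum_fiberwise_of_maps_to hmaps]
    have key : ∀ k ∈ u.image ν,
        ∑ g ∈ u.filter (fun g => ν g = k), Real.exp (-(α * ν g)) ≤ Real.exp (-1) ^ k := by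
      intro k _
      have hsub : u.filter (fun g => ν g = k) ⊆ (hfin k).toFinset := by
        intro g hg
        rw [Finset.mem_filter] at hg
        rw [Set.Finite.mem_toFinset]
        exact hg.2 ▸ hmemν g
      have hval : ∀ g ∈ u.filter (fun g => ν g = k),
          Real.exp (-(α * ν g)) = Real.exp (-(α * k)) := by
        intro g hg
        rw [Finset.mem_filter] at hg
        rw [hg.2]
      rw [Finset.sum_congr rfl hval, Finset.sum_const, nsmul_eq_mul]
      calc ((u.filter (fun g => ν g = k)).card : ℝ) * Real.exp (-(α * k))
          ≤ ((hfin k).toFinset.card : ℝ) * Real.exp (-(α * k)) := by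
            apply mul_le_mul_of_nonneg_right _ (Real.exp_pos _).le
            exact_mod_cast Finset.card_le_card hsub
        _ ≤ Real.exp (C * k) * Real.exp (-(α * k)) := by
            apply mul_le_mul_of_nonneg_right (hC k) (Real.exp_pos _).le
        _ = Real.exp ((C - α) * k) := by
            rw [← Real.exp_add]; ring_nf
        _ ≤ Real.exp ((-1 : ℝ) * k) := by
            apply Real.exp_le_exp.mpr
            apply mul_le_mul_of_nonneg_right hCα (Nat.cast_nonneg k)
        _ = Real.exp (-1) ^ k := by
            rw [← Real.exp_nat_mul]; ring_nf
    calc ∑ k ∈ u.image ν, ∑ g ∈ u.filter (fun g => ν g = k), Real.exp (-(α * ν g))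
        ≤ ∑ k ∈ u.image ν, Real.exp (-1) ^ k := Finset.sum_le_sum key
      _ ≤ ∑' k : ℕ, Real.exp (-1) ^ k := by
          apply Summable.sum_le_tsum _ (fun k _ => by positivity)
          exact summable_geometric_of_lt_one (by positivity)
            (Real.exp_lt_one_iff.mpr (by norm_num))
  -- comparison
  have hbig : Summable (fun g : G => α * ((ν g : ℝ) * μ g) + Real.exp (-(α * ν g))) :=
    (hmom.mul_left α).add hexp
  apply Summable.of_nonneg_of_le _ _ hbig
  · intro g
    have hlog : Real.log (μ g) ≤ 0 := Real.log_nonpos (hpos g) (hμ1 g)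
    nlinarith [hpos g, hlog]
  · intro g
    have := aux_neg_mul_log_le (μ g) (α * ν g) (hpos g)
    nlinarith [this]
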